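/- arXiv:1503.04989 — 2 statements merged into one kernel-verified Lean document; each statement's English description precedes it below -/
import Mathlib

section
/- Let K be a compact metric space and f : ℝ → ℝ be continuously differentiable with derivative f'. Then the Nemytskii (superposition) operator F : C(K,ℝ) → C(K,ℝ) defined by F(x)(ξ) = f(x(ξ)) is Fréchet differentiable at every x ∈ C(K,ℝ), and its Fréchet derivative acts as the multiplication operator [DF(x)·h](ξ) = f'(x(ξ))·h(ξ). -/
/-- Fréchet differentiability of the Nemytskii operator on `C(K, ℝ)`. -/
theorem nemytskii_frechet_differentiable
    {K : Type*} [MetricSpace K] [CompactSpace K]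
    (f f' : ℝ → ℝ)
    (hf : ∀ σ : ℝ, HasDerivAt f (f' σ) σ) (hf' : Continuous f')
    (F : C(K, ℝ) → C(K, ℝ))
    (hF : ∀ (x : C(K, ℝ)) (ξ : K), F x ξ = f (x ξ)) :
    ∀ x : C(K, ℝ), ∃ D : C(K, ℝ) →L[ℝ] C(K, ℝ),
      HasFDerivAt F D x ∧ ∀ (h : C(K, ℝ)) (ξ : K), D h ξ = f' (x ξ) * h ξ := by
  intro x
  set g : C(K, ℝ) := ⟨fun ξ => f' (x ξ), hf'.comp x.continuous⟩ with hg
  refine ⟨ContinuousLinearMap.mul ℝ C(K, ℝ) g, ?_, fun h ξ => rfl⟩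
  rw [hasFDerivAt_iff_isLittleO_nhds_zero]
  rw [Asymptotics.isLittleO_iff]
  intro ε hε
  -- compact set containing a 1-neighborhood of the range of x
  set S : Set ℝ := Set.range x with hS
  have hScomp : IsCompact S := isCompact_range x.continuous
  set T : Set ℝ := Metric.cthickening 1 S with hT
  have hTcomp : IsCompact T := hScomp.cthickening
  have hST : ∀ σ ∈ S, ∀ c : ℝ, dist c σ ≤ 1 → c ∈ T := by
    intro σ hσ c hc
    exact Metric.mem_cthickening_of_dist_le c σ 1 S hσ hc
  have hu : UniformContinuousOn f' T :=
    hTcomp.uniformContinuousOn_of_continuous hf'.continuousOn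
  obtain ⟨δ, hδpos, hδ⟩ := Metric.uniformContinuousOn_iff.mp hu ε hε
  set δ' : ℝ := min (δ / 2) 1 with hδ'
  have hδ'pos : 0 < δ' := lt_min (by linarith) one_pos
  filter_upwards [Metric.ball_mem_nhds (0 : C(K, ℝ)) hδ'pos] with h hh
  have hhn : ‖h‖ < δ' := by simpa using hh
  -- pointwise estimate
  rw [ContinuousMap.norm_le _ (by positivity)]
  intro ξ
  set σ : ℝ := x ξ with hσdef
  have hσS : σ ∈ S := Set.mem_range_self ξ
  have hu1 : |h ξ| ≤ ‖h‖ := h.norm_coe_le_norm ξ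
  -- MVT-type estimate on the closed ball around σ of radius ‖h‖
  have key : ‖f (σ + h ξ) - f σ - (h ξ) * f' σ‖ ≤ ε * ‖h‖ := by
    set s : Set ℝ := Metric.closedBall σ ‖h‖ with hs
    have hsT : ∀ c ∈ s, c ∈ T := by
      intro c hc
      exact hST σ hσS c (le_trans (Metric.mem_closedBall.mp hc) (le_of_lt (lt_of_lt_of_le hhn (min_le_right _ _))))
    have hbound : ∀ c ∈ s, ‖f' c - f' σ‖ ≤ ε := by
      intro c hc
      have hd : dist c σ < δ := by
        calc dist c σ ≤ ‖h‖ := Metric.mem_closedBall.mp hc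
          _ < δ' := hhn
          _ ≤ δ / 2 := min_le_left _ _
          _ < δ := by linarith
      exact le_of_lt (hδ c (hsT c hc) σ (hST σ hσS σ (by simp)) hd)
    have hder : ∀ c ∈ s, HasDerivWithinAt (fun t => f t - t * f' σ) (f' c - f' σ) s c := by
      intro c _
      exact ((hf c).sub (hasDerivAt_mul_const (f' σ))).hasDerivWithinAt
    have hσs : σ ∈ s := Metric.mem_closedBall_self (norm_nonneg h)
    have hσhs : σ + h ξ ∈ s := by
      simp only [hs, Metric.mem_closedBall, dist_eq_norm]
      simpa using hu1
    have := Convex.norm_image_sub_le_of_norm_hasDerivWithin_le hder hbound (convex_closedBall σ ‖h‖) hσs hσhs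
    calc ‖f (σ + h ξ) - f σ - (h ξ) * f' σ‖
        = ‖(f (σ + h ξ) - (σ + h ξ) * f' σ) - (f σ - σ * f' σ)‖ := by ring_nf
      _ ≤ ε * ‖σ + h ξ - σ‖ := this
      _ = ε * |h ξ| := by simp [Real.norm_eq_abs]
      _ ≤ ε * ‖h‖ := by
          exact mul_le_mul_of_nonneg_left hu1 (le_of_lt hε)
  calc ‖(F (x + h) - F x - (ContinuousLinearMap.mul ℝ C(K, ℝ) g) h) ξ‖
      = ‖f (σ + h ξ) - f σ - (h ξ) * f' σ‖ := by
        simp only [ContinuousMap.sub_apply, hF, ContinuousMap.add_apply]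
        norm_num [ContinuousLinearMap.mul_apply', hg, hσdef]
        ring_nf
    _ ≤ ε * ‖h‖ := key
end

section
/- Let K be a compact metric space and f : ℝ → ℝ be continuously differentiable with f'(σ) ≤ β for all σ ∈ ℝ and some β ∈ ℝ. Then the Nemytskii operator F(x)(ξ) = f(x(ξ)) satisfies: F − β·I is dissipative on C(K,ℝ), i.e. for all x, y ∈ C(K,ℝ) and all α ≥ 0, ‖x − y‖_∞ ≤ ‖x − y − α((F(x) − βx) − (F(y) − βy))‖_∞. -/
/-- Pointwise dissipativity for an antitone scalar map. -/
lemma pointwise_dissip {g : ℝ → ℝ} (hg : Antitone g) (a b α : ℝ) (hα : 0 ≤ α) :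
    |a - b| ≤ |a - b - α * (g a - g b)| := by
  rcases le_total b a with h | h
  · have hg' : g a ≤ g b := hg h
    have h1 : 0 ≤ a - b := by linarith
    have h2 : 0 ≤ -(α * (g a - g b)) := by nlinarith
    rw [abs_of_nonneg h1, abs_of_nonneg (by linarith)]
    linarith
  · have hg' : g b ≤ g a := hg h
    have h1 : a - b ≤ 0 := by linarith
    have h2 : α * (g a - g b) ≥ 0 := by nlinarith
    rw [abs_of_nonpos h1, abs_of_nonpos (by linarith)]
    linarith

/-- If `f' ≤ β` then the Nemytskii operator minus `β • I` is dissipative on `C(K, ℝ)`. -/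
theorem nemytskii_shift_dissipative
    {K : Type*} [MetricSpace K] [CompactSpace K]
    (f f' : ℝ → ℝ) (β : ℝ)
    (hf : ∀ σ : ℝ, HasDerivAt f (f' σ) σ) (hf' : Continuous f')
    (hβ : ∀ σ : ℝ, f' σ ≤ β)
    (F : C(K, ℝ) → C(K, ℝ))
    (hF : ∀ (x : C(K, ℝ)) (ξ : K), F x ξ = f (x ξ)) :
    ∀ (x y : C(K, ℝ)) (α : ℝ), 0 ≤ α →
      ‖x - y‖ ≤ ‖x - y - α • ((F x - β • x) - (F y - β • y))‖ := by
  -- g := f - β • id is antitone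
  set g : ℝ → ℝ := fun σ => f σ - β * σ with hgdef
  have hg : Antitone g := by
    have hderiv : ∀ σ : ℝ, HasDerivAt g (f' σ - β) σ := fun σ =>
      (hf σ).sub (by simpa using (hasDerivAt_id σ).const_mul β)
    have := fun σ => (hderiv σ).deriv
    apply antitone_of_deriv_nonpos
    · exact fun σ => (hderiv σ).differentiableAt
    · intro σ
      rw [(hderiv σ).deriv]
      linarith [hβ σ]
  intro x y α hα
  rcases isEmpty_or_nonempty K with hK | hK
  · have : x - y = 0 := by ext ξ; exact (hK.false ξ).elim
    simp [this]
  · -- attain the sup of |(x-y) ξ|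
    obtain ⟨ξ, -, hξ⟩ := isCompact_univ.exists_isMaxOn Set.univ_nonempty
      ((x - y).continuous.abs.continuousOn)
    have hbound : ‖x - y‖ ≤ |(x - y) ξ| := by
      apply ContinuousMap.norm_le _ (abs_nonneg _) |>.mpr
      intro η
      simpa using hξ (Set.mem_univ η)
    refine hbound.trans ?_
    have key : |(x - y) ξ| ≤ |(x - y - α • ((F x - β • x) - (F y - β • y))) ξ| := by
      have hpt : (x - y - α • ((F x - β • x) - (F y - β • y))) ξ
          = (x ξ - y ξ) - α * (g (x ξ) - g (y ξ)) := by
        simp only [ContinuousMap.sub_apply, ContinuousMap.smul_apply, smul_eq_mul, hF, hgdef]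
      rw [hpt]
      simpa using pointwise_dissip hg (x ξ) (y ξ) α hα
    exact key.trans ((x - y - α • ((F x - β • x) - (F y - β • y))).norm_coe_le_norm ξ)
end
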